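/- Let U be a square-integrable real random variable on a probability space, let b < 0, and set P_f := P(U < b), assumed to satisfy 0 < P_f < 1. Assume the conditional distribution of U given the event {U < b} is the standard Gaussian distribution conditioned on (−∞, b), and assume the conditional variance Var[U | U ≥ b] is strictly positive. Let m_S := E[U | U ≥ b] and u_opt := −φ(b)/Φ(b). Then Var[U] > (1 − P_f)·m_S² + P_f·(1 + b·u_opt) − ((1 − P_f)·m_S + P_f·u_opt)². -/

import Mathlib

open MeasureTheory ProbabilityTheory

/-- The standard normal probability density function `φ`. -/
noncomputable def stdNormalPdf (x : ℝ) : ℝ :=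
  (Real.sqrt (2 * Real.pi))⁻¹ * Real.exp (-x ^ 2 / 2)

/-- The standard normal cumulative distribution function `Φ`. -/
noncomputable def stdNormalCdf (b : ℝ) : ℝ :=
  ∫ x in Set.Iio b, stdNormalPdf x

open Real Set Filter
open scoped ENNReal NNReal

lemma stdNormalPdf_eq :
    stdNormalPdf = fun x => (Real.sqrt (2 * Real.pi))⁻¹ * Real.exp (-(1/2) * x ^ 2) := by
  funext x; rw [stdNormalPdf]; ring_nf

lemma stdNormalPdf_nonneg (x : ℝ) : 0 ≤ stdNormalPdf x :=
  mul_nonneg (inv_nonneg.mpr (Real.sqrt_nonneg _)) (Real.exp_pos _).le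

lemma stdNormalPdf_pos (x : ℝ) : 0 < stdNormalPdf x :=
  mul_pos (inv_pos.mpr (Real.sqrt_pos.mpr (by positivity))) (Real.exp_pos _)

lemma measurable_stdNormalPdf : Measurable stdNormalPdf := by
  unfold stdNormalPdf; fun_prop

lemma integrable_stdNormalPdf : Integrable stdNormalPdf := by
  rw [stdNormalPdf_eq]
  exact (integrable_exp_neg_mul_sq (by norm_num : (0:ℝ) < 1/2)).const_mul _

lemma integrable_mul_stdNormalPdf : Integrable (fun x => x * stdNormalPdf x) := by
  rw [stdNormalPdf_eq]
  simp_rw [mul_comm ((Real.sqrt (2 * Real.pi))⁻¹), ← mul_assoc]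
  exact (integrable_mul_exp_neg_mul_sq (by norm_num : (0:ℝ) < 1/2)).mul_const _

lemma integrable_sq_mul_stdNormalPdf : Integrable (fun x => x ^ 2 * stdNormalPdf x) := by
  refine Integrable.mono' (((integrable_exp_neg_mul_sq (show (0:ℝ) < 1/4 by norm_num)).const_mul
      (4 * (Real.sqrt (2 * Real.pi))⁻¹))) ?_ (Eventually.of_forall fun x => ?_)
  · exact ((measurable_id.pow_const 2).mul measurable_stdNormalPdf).aestronglyMeasurable
  · rw [Real.norm_eq_abs, abs_of_nonneg (mul_nonneg (sq_nonneg x) (stdNormalPdf_nonneg x))]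
    rw [stdNormalPdf]
    have h2 : Real.exp (x ^ 2 / 4) * Real.exp (-x ^ 2 / 2) = Real.exp (-(1/4) * x ^ 2) := by
      rw [← Real.exp_add]; ring_nf
    have h3 : (0:ℝ) < Real.sqrt (2 * Real.pi) := Real.sqrt_pos.mpr (by positivity)
    have h4 : x ^ 2 * Real.exp (-x ^ 2 / 2) ≤ 4 * Real.exp (-(1/4) * x ^ 2) := by
      calc x ^ 2 * Real.exp (-x ^ 2 / 2) ≤ 4 * Real.exp (x ^ 2 / 4) * Real.exp (-x ^ 2 / 2) := by
            nlinarith [Real.exp_pos (-x ^ 2 / 2), Real.add_one_le_exp (x ^ 2 / 4)]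
        _ = 4 * Real.exp (-(1/4) * x ^ 2) := by rw [mul_assoc, h2]
    calc x ^ 2 * ((Real.sqrt (2 * Real.pi))⁻¹ * Real.exp (-x ^ 2 / 2))
        = (Real.sqrt (2 * Real.pi))⁻¹ * (x ^ 2 * Real.exp (-x ^ 2 / 2)) := by ring
      _ ≤ (Real.sqrt (2 * Real.pi))⁻¹ * (4 * Real.exp (-(1/4) * x ^ 2)) :=
          mul_le_mul_of_nonneg_left h4 (inv_nonneg.mpr h3.le)
      _ = 4 * (Real.sqrt (2 * Real.pi))⁻¹ * Real.exp (-(1/4) * x ^ 2) := by ring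

lemma hasDerivAt_neg_stdNormalPdf (x : ℝ) :
    HasDerivAt (fun y => -stdNormalPdf y) (x * stdNormalPdf x) x := by
  have h1 : HasDerivAt (fun y : ℝ => -y ^ 2 / 2) (-x) x := by
    have h := ((hasDerivAt_pow 2 x).neg).div_const 2
    refine h.congr_deriv ?_
    push_cast
    ring
  have h2 := (h1.exp.const_mul ((Real.sqrt (2 * Real.pi))⁻¹)).neg
  have h3 : HasDerivAt (fun y => -stdNormalPdf y)
      (-((Real.sqrt (2 * Real.pi))⁻¹ * (Real.exp (-x ^ 2 / 2) * -x))) x := by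
    refine h2.congr_of_eventuallyEq (Eventually.of_forall fun y => ?_)
    simp [stdNormalPdf]
  convert h3 using 1
  simp [stdNormalPdf]
  ring

lemma tendsto_stdNormalPdf_atBot : Tendsto stdNormalPdf atBot (nhds 0) := by
  have h0 : Tendsto (fun x : ℝ => -x) atBot atTop := tendsto_neg_atBot_atTop
  have hsq : Tendsto (fun x : ℝ => x ^ 2) atBot atTop := by
    have h := (tendsto_pow_atTop (by norm_num : (2:ℕ) ≠ 0)).comp h0
    refine h.congr fun x => ?_
    simp [Function.comp]
  have h1 : Tendsto (fun x : ℝ => -x ^ 2 / 2) atBot atBot := by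
    have := (tendsto_neg_atTop_atBot.comp hsq).atBot_div_const (show (0:ℝ) < 2 by norm_num)
    exact this.congr fun x => by simp [Function.comp]
  have h2 := (Real.tendsto_exp_atBot.comp h1).const_mul ((Real.sqrt (2 * Real.pi))⁻¹)
  rw [mul_zero] at h2
  exact h2.congr fun x => by simp [stdNormalPdf, Function.comp]

lemma tendsto_mul_stdNormalPdf_atBot :
    Tendsto (fun x => x * stdNormalPdf x) atBot (nhds 0) := by
  have h := (tendsto_rpow_abs_mul_exp_neg_mul_sq_cocompact (by norm_num : (0:ℝ) < 1/2) 1).mono_left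
      _root_.atBot_le_cocompact
  have h2 := h.const_mul ((Real.sqrt (2 * Real.pi))⁻¹)
  rw [mul_zero] at h2
  refine squeeze_zero_norm (fun x => ?_) h2
  rw [Real.norm_eq_abs, abs_mul, stdNormalPdf_eq]
  simp only [abs_mul, abs_of_nonneg (Real.exp_pos _).le,
    abs_of_nonneg (inv_nonneg.mpr (Real.sqrt_nonneg (2 * Real.pi))), Real.rpow_one]
  ring_nf
  exact le_refl _

lemma integral_Iio_mul_stdNormalPdf (b : ℝ) :
    ∫ x in Set.Iio b, x * stdNormalPdf x = -stdNormalPdf b := by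
  rw [setIntegral_congr_set Iio_ae_eq_Iic]
  rw [integral_Iic_of_hasDerivAt_of_tendsto' (fun x _ => hasDerivAt_neg_stdNormalPdf x)
    integrable_mul_stdNormalPdf.integrableOn (by simpa using tendsto_stdNormalPdf_atBot.neg)]
  simp

lemma integral_Iio_sq_mul_stdNormalPdf (b : ℝ) :
    ∫ x in Set.Iio b, x ^ 2 * stdNormalPdf x = stdNormalCdf b - b * stdNormalPdf b := by
  have hderiv : ∀ x : ℝ, HasDerivAt (fun y => -(y * stdNormalPdf y))
      (x ^ 2 * stdNormalPdf x - stdNormalPdf x) x := by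
    intro x
    have hpdf : HasDerivAt stdNormalPdf (-(x * stdNormalPdf x)) x := by
      have h := (hasDerivAt_neg_stdNormalPdf x).neg
      exact h.congr_of_eventuallyEq (Eventually.of_forall fun y => by simp)
    have h := ((hasDerivAt_id x).mul hpdf).neg
    refine h.congr_deriv ?_
    simp only [id_eq, one_mul]
    ring
  have hint : Integrable (fun x => x ^ 2 * stdNormalPdf x - stdNormalPdf x) :=
    integrable_sq_mul_stdNormalPdf.sub integrable_stdNormalPdf
  have key : ∫ x in Set.Iic b, (x ^ 2 * stdNormalPdf x - stdNormalPdf x)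
      = -(b * stdNormalPdf b) - 0 :=
    integral_Iic_of_hasDerivAt_of_tendsto' (fun x _ => hderiv x)
      hint.integrableOn (by simpa using tendsto_mul_stdNormalPdf_atBot.neg)
  rw [integral_sub integrable_sq_mul_stdNormalPdf.integrableOn
    integrable_stdNormalPdf.integrableOn] at key
  have h1 : ∫ x in Set.Iic b, stdNormalPdf x = stdNormalCdf b :=
    (setIntegral_congr_set Iio_ae_eq_Iic).symm
  rw [setIntegral_congr_set Iio_ae_eq_Iic]
  linarith [key, h1]

lemma stdNormalCdf_pos (b : ℝ) : 0 < stdNormalCdf b := by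
  rw [stdNormalCdf, setIntegral_pos_iff_support_of_nonneg_ae
    (Eventually.of_forall stdNormalPdf_nonneg) integrable_stdNormalPdf.integrableOn]
  have h : Function.support stdNormalPdf = Set.univ :=
    Set.eq_univ_of_forall fun x => (stdNormalPdf_pos x).ne'
  rw [h, Set.univ_inter]
  simp


lemma gaussianPDFReal_zero_one : gaussianPDFReal 0 1 = stdNormalPdf := by
  funext x
  rw [gaussianPDFReal, stdNormalPdf]
  norm_num

lemma gaussianReal_Iio (b : ℝ) :
    gaussianReal 0 1 (Set.Iio b) = ENNReal.ofReal (stdNormalCdf b) := by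
  rw [gaussianReal_apply_eq_integral 0 one_ne_zero, gaussianPDFReal_zero_one, stdNormalCdf]

lemma integral_cond_gaussian (b : ℝ) (f : ℝ → ℝ) :
    ∫ x, f x ∂((gaussianReal 0 1)[|Set.Iio b])
      = (stdNormalCdf b)⁻¹ * ∫ x in Set.Iio b, f x * stdNormalPdf x := by
  have hpdf : gaussianPDF 0 1 = fun x => ((stdNormalPdf x).toNNReal : ℝ≥0∞) := by
    funext x
    rw [gaussianPDF, gaussianPDFReal_zero_one]
    rfl
  have hval : (volume.withDensity fun x => ((stdNormalPdf x).toNNReal : ℝ≥0∞)) (Set.Iio b)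
      = ENNReal.ofReal (stdNormalCdf b) := by
    rw [← hpdf, ← gaussianReal_of_var_ne_zero 0 one_ne_zero]
    exact gaussianReal_Iio b
  rw [ProbabilityTheory.cond, integral_smul_measure,
    gaussianReal_of_var_ne_zero 0 one_ne_zero, hpdf,
    restrict_withDensity measurableSet_Iio,
    integral_withDensity_eq_integral_smul (measurable_stdNormalPdf.real_toNNReal), hval,
    ENNReal.toReal_inv, ENNReal.toReal_ofReal (stdNormalCdf_pos b).le, smul_eq_mul]
  congr 1
  refine integral_congr_ae (Eventually.of_forall fun x => ?_)
  show (stdNormalPdf x).toNNReal • f x = f x * stdNormalPdf x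
  rw [NNReal.smul_def, Real.coe_toNNReal _ (stdNormalPdf_nonneg x), smul_eq_mul, mul_comm]

lemma integral_id_cond_gaussian (b : ℝ) :
    ∫ x, x ∂((gaussianReal 0 1)[|Set.Iio b]) = -stdNormalPdf b / stdNormalCdf b := by
  rw [integral_cond_gaussian b (fun x => x), integral_Iio_mul_stdNormalPdf b]
  field_simp

lemma integral_sq_cond_gaussian (b : ℝ) :
    ∫ x, x ^ 2 ∂((gaussianReal 0 1)[|Set.Iio b])
      = 1 + b * (-stdNormalPdf b / stdNormalCdf b) := by
  rw [integral_cond_gaussian b (fun x => x ^ 2), integral_Iio_sq_mul_stdNormalPdf b]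
  have h := (stdNormalCdf_pos b).ne'
  field_simp
  ring

/-- Lower bound on the ensemble variance: if the conditional law of `U` given
`{U < b}` is the standard Gaussian truncated to `(-∞, b)` and the safe particles
have positive conditional variance, then
`Var[U] > (1-P_f) m_S² + P_f (1 + b u_opt) - ((1-P_f) m_S + P_f u_opt)²`. -/
theorem enkf_variance_lower_bound
    {Ω : Type} [MeasurableSpace Ω] (P : Measure Ω) [IsProbabilityMeasure P]
    (U : Ω → ℝ) (hUmeas : Measurable U) (hU2 : MeasureTheory.MemLp U 2 P)
    (b : ℝ) (hb : b < 0)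
    (Pf : ℝ) (hPf : Pf = (P {ω | U ω < b}).toReal) (hPf0 : 0 < Pf) (hPf1 : Pf < 1)
    (hcond : Measure.map U (P[|{ω | U ω < b}]) = (gaussianReal 0 1)[|Set.Iio b])
    (hvar : 0 < variance U (P[|{ω | b ≤ U ω}]))
    (mS : ℝ) (hmS : mS = ∫ ω, U ω ∂(P[|{ω | b ≤ U ω}]))
    (uopt : ℝ) (huopt : uopt = -(stdNormalPdf b) / stdNormalCdf b) :
    (1 - Pf) * mS ^ 2 + Pf * (1 + b * uopt) - ((1 - Pf) * mS + Pf * uopt) ^ 2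
      < variance U P := by
  set A := {ω | U ω < b} with hA
  have hAc : {ω | b ≤ U ω} = Aᶜ := by ext ω; simp [hA, not_lt]
  have hAmeas : MeasurableSet A := hUmeas measurableSet_Iio
  have hPAne : P A ≠ 0 := by
    intro h
    rw [hPf, h] at hPf0
    simp at hPf0
  have hPAcReal : (P Aᶜ).toReal = 1 - Pf := by
    rw [measure_compl hAmeas (measure_ne_top P A), measure_univ,
      ENNReal.toReal_sub_of_le prob_le_one (by simp), ENNReal.toReal_one, hPf]
  have hPAcne : P Aᶜ ≠ 0 := by
    intro h
    rw [h] at hPAcReal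
    simp at hPAcReal
    linarith
  haveI iA : IsProbabilityMeasure (P[|A]) := cond_isProbabilityMeasure hPAne
  haveI iAc : IsProbabilityMeasure (P[|Aᶜ]) := cond_isProbabilityMeasure hPAcne
  have condInt : ∀ (s : Set Ω) (f : Ω → ℝ),
      ∫ ω, f ω ∂(P[|s]) = (P s).toReal⁻¹ * ∫ ω in s, f ω ∂P := by
    intro s f
    rw [ProbabilityTheory.cond, integral_smul_measure, ENNReal.toReal_inv, smul_eq_mul]
  -- conditional moments on the failure region
  have hI1 : ∫ ω, U ω ∂(P[|A]) = uopt := by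
    have h := integral_map (μ := P[|A]) hUmeas.aemeasurable
      (f := fun x : ℝ => x) aestronglyMeasurable_id
    rw [hcond] at h
    rw [← h, integral_id_cond_gaussian b, huopt]
  have hI2 : ∫ ω, U ω ^ 2 ∂(P[|A]) = 1 + b * uopt := by
    have h := integral_map (μ := P[|A]) hUmeas.aemeasurable
      (f := fun x : ℝ => x ^ 2) ((measurable_id.pow_const 2).aestronglyMeasurable)
    rw [hcond] at h
    rw [← h, integral_sq_cond_gaussian b, huopt]
  have intU : Integrable U P := hU2.integrable one_le_two
  have intU2 : Integrable (fun ω => U ω ^ 2) P := hU2.integrable_sq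
  have hPfne : Pf ≠ 0 := hPf0.ne'
  -- splitting the mean
  have e1 : ∫ ω in A, U ω ∂P = Pf * uopt := by
    have h := condInt A U
    rw [hI1, ← hPf] at h
    field_simp at h
    linarith
  have e1' : ∫ ω in Aᶜ, U ω ∂P = (1 - Pf) * mS := by
    have h := condInt Aᶜ U
    rw [hAc] at hmS
    rw [← hmS, hPAcReal] at h
    have h1 : (1:ℝ) - Pf ≠ 0 := by linarith
    field_simp at h
    linarith
  have hsplit1 : ∫ ω, U ω ∂P = Pf * uopt + (1 - Pf) * mS := by
    rw [← integral_add_compl hAmeas intU, e1, e1']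
  set a2 := ∫ ω, U ω ^ 2 ∂(P[|Aᶜ]) with ha2
  have e2 : ∫ ω in A, U ω ^ 2 ∂P = Pf * (1 + b * uopt) := by
    have h := condInt A (fun ω => U ω ^ 2)
    rw [hI2, ← hPf] at h
    field_simp at h
    linarith
  have e2' : ∫ ω in Aᶜ, U ω ^ 2 ∂P = (1 - Pf) * a2 := by
    have h := condInt Aᶜ (fun ω => U ω ^ 2)
    rw [← ha2, hPAcReal] at h
    have h1 : (1:ℝ) - Pf ≠ 0 := by linarith
    field_simp at h
    linarith
  have hsplit2 : ∫ ω, U ω ^ 2 ∂P = Pf * (1 + b * uopt) + (1 - Pf) * a2 := by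
    rw [← integral_add_compl hAmeas intU2, e2, e2']
  -- variance identities
  have hU2c : MemLp U 2 (P[|Aᶜ]) := by
    rw [ProbabilityTheory.cond]
    exact (hU2.restrict _).smul_measure (ENNReal.inv_ne_top.mpr hPAcne)
  have hvarP : variance U P = ∫ ω, U ω ^ 2 ∂P - (∫ ω, U ω ∂P) ^ 2 := by
    rw [variance_eq_sub hU2]
    congr 1
  have hvarc : variance U (P[|Aᶜ]) = a2 - mS ^ 2 := by
    rw [variance_eq_sub hU2c]
    rw [hAc] at hmS
    rw [← hmS, ha2]
    congr 1
  rw [hAc] at hvar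
  rw [hvarc] at hvar
  rw [hvarP, hsplit1, hsplit2]
  nlinarith [hvar, hPf1, sq_nonneg (mS - uopt)]
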